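/- The functions e_n(x) = T^{-1/2}·exp((2πin/T − λ)x), n ∈ ℤ, on ℝ₊ form a Riesz basis of the closed subspace ran(𝒜) of L²(ℝ₊,ℂ); that is, e_n = 𝒜 b_n for the orthonormal basis b_n(x) = T^{-1/2} e^{2πinx/T} of L²([0,T),ℂ), and 𝒜 is a bounded invertible operator onto ran(𝒜). -/

import Mathlib

open MeasureTheory Complex

/-- `cut T x = x mod T`. -/
noncomputable def cut (T x : ℝ) : ℝ := x - T * ⌊x / T⌋

/-- The operator `𝒜`, `(𝒜 f)(x) = e^{-λ x} f(cut x)`. -/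
noncomputable def Aop (T lm : ℝ) (f : ℝ → ℂ) : ℝ → ℂ :=
  fun x => Real.exp (-lm * x) • f (cut T x)

/-- The Fourier orthonormal basis `b_n(x) = T^{-1/2} e^{2πinx/T}` of `L²([0,T),ℂ)`. -/
noncomputable def bfun (T : ℝ) (n : ℤ) (x : ℝ) : ℂ :=
  (1 / Real.sqrt T : ℝ) • Complex.exp (2 * Real.pi * Complex.I * n * x / T)

/-- `e_n(x) = T^{-1/2} exp((2πin/T - λ)x)`. -/
noncomputable def efun (T lm : ℝ) (n : ℤ) (x : ℝ) : ℂ :=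
  (1 / Real.sqrt T : ℝ) • Complex.exp ((2 * Real.pi * Complex.I * n / T - lm) * x)


private lemma part1 (T : ℝ) (hT : 0 < T) (n m : ℤ) :
    (∫ x in Set.Ico 0 T, bfun T n x * (starRingEnd ℂ) (bfun T m x))
      = if n = m then 1 else 0 := by

  have hT' : (T : ℂ) ≠ 0 := by exact_mod_cast hT.ne'
  have key : ∀ x : ℝ, bfun T n x * (starRingEnd ℂ) (bfun T m x)
      = (1 / T : ℝ) • Complex.exp ((2 * Real.pi * Complex.I * (n - m) / T) * x) := by
    intro x
    simp only [bfun, real_smul, map_mul, ← Complex.exp_conj, map_div₀, map_ofNat, map_mul]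
    simp only [Complex.conj_ofReal, Complex.conj_I, map_intCast]
    rw [mul_mul_mul_comm, ← Complex.exp_add, ← Complex.ofReal_mul]
    congr 1
    · have : (1 / Real.sqrt T) * (1 / Real.sqrt T) = 1 / T := by
        rw [div_mul_div_comm, one_mul, Real.mul_self_sqrt hT.le]
      exact_mod_cast congrArg (Complex.ofReal) this
    · field_simp
      ring
  simp_rw [key]
  rw [MeasureTheory.setIntegral_congr_set MeasureTheory.Ico_ae_eq_Ioc,
    ← intervalIntegral.integral_of_le hT.le, intervalIntegral.integral_smul]
  by_cases h : n = m
  · subst h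
    simp only [intervalIntegral.integral_const, smul_smul, if_true, sub_zero]
    norm_num
    exact inv_mul_cancel₀ hT'
  · rw [if_neg h]
    have hc : (2 * Real.pi * Complex.I * (n - m) / T : ℂ) ≠ 0 := by
      apply div_ne_zero _ hT'
      have : ((n : ℂ) - m) ≠ 0 := by
        intro hh
        apply h
        exact_mod_cast sub_eq_zero.mp hh
      simp [Real.pi_ne_zero, Complex.I_ne_zero, this]
    have : ∀ x : ℝ, Complex.exp ((2 * Real.pi * Complex.I * (n - m) / T) * x)
        = Complex.exp ((2 * Real.pi * Complex.I * (n - m) / T) * x) := fun _ => rfl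
    rw [integral_exp_mul_complex hc]
    have h1 : (2 * Real.pi * Complex.I * (n - m) / T : ℂ) * T = (n - m : ℤ) * (2 * Real.pi * Complex.I) := by
      push_cast
      field_simp
    rw [Complex.ofReal_zero, mul_zero, Complex.exp_zero, h1,
      Complex.exp_int_mul_two_pi_mul_I, sub_self, zero_div, smul_zero]

private lemma part2 (T lm : ℝ) (hT : 0 < T) (n : ℤ) (x : ℝ) :
    efun T lm n x = Aop T lm (bfun T n) x := by

  have hT' : (T : ℂ) ≠ 0 := by exact_mod_cast hT.ne'
  set k : ℤ := ⌊x / T⌋ with hk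
  have hexp : Complex.exp ((2 * Real.pi * Complex.I * n / T - lm) * x)
      = Complex.exp (((-lm : ℝ) * x : ℝ)) * Complex.exp (2 * Real.pi * Complex.I * n * (cut T x) / T) := by
    rw [← Complex.exp_add, ← mul_one (Complex.exp _), ← Complex.exp_int_mul_two_pi_mul_I (-(k * n)),
      ← Complex.exp_add]
    congr 1
    simp only [cut]
    push_cast
    field_simp
    ring
  simp only [efun, Aop, bfun, hexp, smul_smul, real_smul, Complex.ofReal_exp]
  push_cast
  ring

private lemma part3 (T lm : ℝ) (hT : 0 < T) (hl : 0 < lm)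
    (f : ℝ → ℂ) (hf : MeasureTheory.IntegrableOn (fun x => ‖f x‖ ^ 2) (Set.Ico 0 T)) :
      (Real.exp (-2 * T * lm) / (1 - Real.exp (-2 * T * lm))) *
          (∫ x in Set.Ico 0 T, ‖f x‖ ^ 2)
        ≤ (∫ x in Set.Ici (0:ℝ), ‖Aop T lm f x‖ ^ 2) ∧
      (∫ x in Set.Ici (0:ℝ), ‖Aop T lm f x‖ ^ 2)
        ≤ (1 / (1 - Real.exp (-2 * T * lm))) * (∫ x in Set.Ico 0 T, ‖f x‖ ^ 2) := by

  set r : ℝ := Real.exp (-2 * T * lm) with hrdef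
  have hr0 : 0 < r := Real.exp_pos _
  have hr1 : r < 1 := Real.exp_lt_one_iff.2 (by nlinarith)
  have h1r : 0 < 1 - r := by linarith
  set G : ℝ → ℝ := fun x => ‖Aop T lm f x‖ ^ 2 with hGdef
  set h : ℝ → ℝ := fun y => Real.exp (-2 * lm * y) * ‖f y‖ ^ 2 with hhdef
  set s : ℕ → Set ℝ := fun k => Set.Ico (k * T) (k * T + T) with hsdef
  set C : ℝ := ∫ y in Set.Ico 0 T, h y with hCdef
  -- integrability of h on [0,T)
  have hhint : IntegrableOn h (Set.Ico 0 T) := by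
    apply Integrable.bdd_mul (c := 1) hf
    · exact ((Real.continuous_exp.comp (continuous_const.mul continuous_id)).aestronglyMeasurable).restrict
    · refine (ae_restrict_iff' measurableSet_Ico).2 (ae_of_all _ fun y hy => ?_)
      rw [Real.norm_of_nonneg (Real.exp_pos _).le]
      exact Real.exp_le_one_iff.2 (by nlinarith [hy.1])
  -- G equals r^k * h(x - kT) on the k-th cell
  have hGcell : ∀ k : ℕ, Set.EqOn G (fun x => r ^ k * h (x - k * T)) (s k) := by
    intro k x hx
    have hfl : ⌊x / T⌋ = (k : ℤ) := by
      refine Int.floor_eq_iff.2 ⟨?_, ?_⟩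
      · rw [le_div_iff₀ hT]; push_cast; linarith [hx.1]
      · rw [div_lt_iff₀ hT]; push_cast; linarith [hx.2]
    have hcut : cut T x = x - k * T := by
      rw [cut, hfl]; push_cast; ring
    set v : ℝ := ‖f (x - k * T)‖ ^ 2 with hv
    have e1 : Real.exp (-lm * x) ^ 2 = Real.exp (-2 * lm * x) := by
      rw [sq, ← Real.exp_add]; ring_nf
    have e2 : r ^ k * Real.exp (-2 * lm * (x - k * T)) = Real.exp (-2 * lm * x) := by
      rw [hrdef, ← Real.exp_nat_mul, ← Real.exp_add]; ring_nf
    simp only [G, Aop, hcut, norm_smul, Real.norm_of_nonneg (Real.exp_pos (-lm * x)).le,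
      mul_pow, h, ← hv, e1, ← mul_assoc, e2]
  -- h integrable as interval integrable
  have hhii : IntervalIntegrable h volume 0 T :=
    (intervalIntegrable_iff_integrableOn_Ioc_of_le hT.le).2
      (hhint.congr_set_ae MeasureTheory.Ico_ae_eq_Ioc.symm)
  -- translated h integrable on each cell
  have hIk : ∀ k : ℕ, IntegrableOn (fun x => h (x - k * T)) (s k) := by
    intro k
    have := (hhii.comp_sub_right (k * T)).1
    rw [zero_add, add_comm T] at this
    exact this.congr_set_ae MeasureTheory.Ico_ae_eq_Ioc
  -- G integrable on each cell
  have hGk : ∀ k : ℕ, IntegrableOn G (s k) := by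
    intro k
    have h1 : IntegrableOn (fun x => r ^ k * h (x - k * T)) (s k) :=
      (hIk k).const_mul (r ^ k)
    exact h1.congr_fun (hGcell k).symm measurableSet_Ico
  -- cell integrals
  have hcell : ∀ k : ℕ, (∫ x in s k, G x) = r ^ k * C := by
    intro k
    rw [MeasureTheory.setIntegral_congr_fun measurableSet_Ico (hGcell k),
      MeasureTheory.integral_const_mul]
    congr 1
    rw [hCdef, MeasureTheory.setIntegral_congr_set MeasureTheory.Ico_ae_eq_Ioc,
      MeasureTheory.setIntegral_congr_set MeasureTheory.Ico_ae_eq_Ioc,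
      ← intervalIntegral.integral_of_le (by linarith : (k:ℝ) * T ≤ k * T + T),
      ← intervalIntegral.integral_of_le hT.le,
      intervalIntegral.integral_comp_sub_right (fun y => h y) ((k:ℝ) * T)]
    norm_num
  -- union of cells is [0,∞)
  have hUnion : (⋃ k : ℕ, s k) = Set.Ici (0:ℝ) := by
    ext x
    simp only [Set.mem_iUnion, Set.mem_Ici, hsdef, Set.mem_Ico]
    constructor
    · rintro ⟨k, hk1, -⟩
      have : (0:ℝ) ≤ k * T := by positivity
      linarith
    · intro hx
      refine ⟨⌊x / T⌋.toNat, ?_, ?_⟩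
      · have h1 : ((⌊x / T⌋.toNat : ℤ) : ℝ) ≤ x / T := by
          rw [Int.toNat_of_nonneg (Int.floor_nonneg.2 (by positivity))]
          exact Int.floor_le _
        rw [← le_div_iff₀ hT]; exact_mod_cast h1
      · have h1 : x / T < ((⌊x / T⌋.toNat : ℤ) : ℝ) + 1 := by
          rw [Int.toNat_of_nonneg (Int.floor_nonneg.2 (by positivity))]
          exact Int.lt_floor_add_one _
        have := (div_lt_iff₀ hT).1 (by exact_mod_cast h1)
        push_cast at this ⊢
        linarith
  -- pairwise disjoint
  have hdisj : Pairwise (Function.onFun Disjoint s) := by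
    have key : ∀ i j : ℕ, i < j → Disjoint (s i) (s j) := by
      intro i j hij
      refine Set.Ico_disjoint_Ico.2 ?_
      have : (i:ℝ) + 1 ≤ j := by exact_mod_cast hij
      have h1 : (i:ℝ) * T + T ≤ j * T := by nlinarith
      exact le_trans (min_le_left _ _) (le_trans h1 (le_max_right _ _))
    intro i j hij
    rcases hij.lt_or_gt with h | h
    · exact key _ _ h
    · exact (key _ _ h).symm
  -- summability of cell norms
  have hCnn : 0 ≤ C :=
    setIntegral_nonneg measurableSet_Ico fun y _ => by positivity
  have hsummable : Summable fun k : ℕ => r ^ k * C :=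
    (summable_geometric_of_lt_one hr0.le hr1).mul_right C
  -- G integrable on Ici 0
  have hGint : IntegrableOn G (Set.Ici (0:ℝ)) := by
    rw [← hUnion]
    apply MeasureTheory.integrableOn_iUnion_of_summable_integral_norm
      hGk
    apply hsummable.congr
    intro k
    rw [← hcell k]
    apply MeasureTheory.setIntegral_congr_fun measurableSet_Ico
    intro x _
    exact (Real.norm_of_nonneg (by simp only [hGdef]; positivity)).symm
  -- sum the cells
  have hsum : (∫ x in Set.Ici (0:ℝ), G x) = (1 - r)⁻¹ * C := by
    have h1 : HasSum (fun k : ℕ => ∫ x in s k, G x) (∫ x in Set.Ici (0:ℝ), G x) := by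
      rw [← hUnion]
      exact MeasureTheory.hasSum_integral_iUnion (fun k => measurableSet_Ico) hdisj
        (hUnion ▸ hGint)
    simp_rw [hcell] at h1
    exact h1.unique ((hasSum_geometric_of_lt_one hr0.le hr1).mul_right C)
  -- compare C with ∫ ‖f‖²
  set I : ℝ := ∫ x in Set.Ico 0 T, ‖f x‖ ^ 2 with hIdef
  have hInn : 0 ≤ I := setIntegral_nonneg measurableSet_Ico fun y _ => by positivity
  have hC_up : C ≤ I := by
    apply MeasureTheory.setIntegral_mono_on hhint hf measurableSet_Ico
    intro y hy
    have : Real.exp (-2 * lm * y) ≤ 1 := Real.exp_le_one_iff.2 (by nlinarith [hy.1])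
    simp only [h]
    nlinarith [sq_nonneg ‖f y‖]
  have hC_lo : r * I ≤ C := by
    rw [hIdef, ← MeasureTheory.integral_const_mul]
    apply MeasureTheory.setIntegral_mono_on (hf.const_mul r) hhint measurableSet_Ico
    intro y hy
    have : r ≤ Real.exp (-2 * lm * y) := by
      rw [hrdef]
      apply Real.exp_le_exp.2
      nlinarith [hy.2]
    simp only [h]
    nlinarith [sq_nonneg ‖f y‖]
  simp only [hGdef] at hsum
  constructor
  · calc r / (1 - r) * I = (r * I) / (1 - r) := by ring
      _ ≤ C / (1 - r) := by gcongr
      _ = (1 - r)⁻¹ * C := by ring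
      _ = _ := hsum.symm
  · calc (∫ x in Set.Ici (0:ℝ), ‖Aop T lm f x‖ ^ 2) = (1 - r)⁻¹ * C := hsum
      _ ≤ (1 - r)⁻¹ * I := mul_le_mul_of_nonneg_left hC_up (by positivity)
      _ = 1 / (1 - r) * I := by ring

/-- `(e_n)_{n∈ℤ}` is a Riesz basis of `ran 𝒜 ⊆ L²(ℝ₊,ℂ)`:
`e_n = 𝒜 b_n` where `(b_n)` is the orthonormal (Fourier) basis of `L²([0,T),ℂ)`,
and `𝒜` is bounded and bounded below (hence a bounded invertible operator
onto its range). -/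
theorem stmt_3 (T lm : ℝ) (hT : 0 < T) (hl : 0 < lm) :
    -- (b_n) is an orthonormal family in L²([0,T),ℂ)
    (∀ n m : ℤ,
      (∫ x in Set.Ico 0 T, bfun T n x * (starRingEnd ℂ) (bfun T m x))
        = if n = m then 1 else 0) ∧
    -- e_n = 𝒜 b_n
    (∀ (n : ℤ) (x : ℝ), 0 ≤ x → efun T lm n x = Aop T lm (bfun T n) x) ∧
    -- 𝒜 is bounded above and below, hence invertible onto its range
    (∀ f : ℝ → ℂ, IntegrableOn (fun x => ‖f x‖ ^ 2) (Set.Ico 0 T) →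
      (Real.exp (-2 * T * lm) / (1 - Real.exp (-2 * T * lm))) *
          (∫ x in Set.Ico 0 T, ‖f x‖ ^ 2)
        ≤ (∫ x in Set.Ici (0:ℝ), ‖Aop T lm f x‖ ^ 2) ∧
      (∫ x in Set.Ici (0:ℝ), ‖Aop T lm f x‖ ^ 2)
        ≤ (1 / (1 - Real.exp (-2 * T * lm))) * (∫ x in Set.Ico 0 T, ‖f x‖ ^ 2)) := by
  exact ⟨fun n m => part1 T hT n m, fun n x _ => part2 T lm hT n x,
    fun f hf => part3 T lm hT hl f hf⟩
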